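/- Let H be a Hilbert space, let A : H ⊇ D → H be a closable densely defined linear operator with minimal closed extension Ā defined on D(Ā) (so that D is dense in D(Ā) with respect to the graph norm ‖x‖ + ‖Ax‖), and let a be a bounded linear operator on H with a(D) ⊆ D(Ā). Suppose the commutator [Ā, a] : D → H, x ↦ Ā(ax) − a(Āx), admits a continuous extension δ which is a bounded operator on H. Then (1) D(Ā) is invariant under a, i.e. a(D(Ā)) ⊆ D(Ā), and (2) for every x ∈ D(Ā), Ā(ax) − a(Āx) = δ(x); that is, δ extends the commutator [Ā, a] defined on all of D(Ā). -/
import Mathlib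


open MeasureTheory

/-- let `A` be a closable densely defined operator on a Hilbert space `H` with
minimal closed extension `A.closure`, and let `a` be a bounded operator with
`a(D) ⊆ D(Ā)`. If the commutator `[Ā, a] : D → H` admits a continuous extension
`δ ∈ L(H)`, then `D(Ā)` is invariant under `a`, and `δ` extends the commutator
`[Ā, a]` defined on all of `D(Ā)`. -/
theorem closed_extension_of_commutator
    (H : Type*) [NormedAddCommGroup H] [InnerProductSpace ℂ H] [CompleteSpace H]
    (A : H →ₗ.[ℂ] H) (hdense : Dense (A.domain : Set H)) (hclosable : A.IsClosable)
    (a : H →L[ℂ] H) (hmapD : ∀ x (hx : x ∈ A.domain), a x ∈ A.closure.domain)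
    (δ : H →L[ℂ] H)
    (hδ : ∀ x (hx : x ∈ A.domain),
      δ x = A.closure ⟨a x, hmapD x hx⟩ - a (A ⟨x, hx⟩)) :
    ∃ hinv : ∀ x ∈ A.closure.domain, a x ∈ A.closure.domain,
      ∀ x (hx : x ∈ A.closure.domain),
        A.closure ⟨a x, hinv x hx⟩ - a (A.closure ⟨x, hx⟩) = δ x := by
  -- the continuous map T (u, v) = (a u, δ u + a v)
  set T : (H × H) →L[ℂ] (H × H) :=
    ((a.comp (ContinuousLinearMap.fst ℂ H H)).prod
      (δ.comp (ContinuousLinearMap.fst ℂ H H) + a.comp (ContinuousLinearMap.snd ℂ H H)))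
    with hT
  have hTapp : ∀ p : H × H, T p = (a p.1, δ p.1 + a p.2) := fun p => rfl
  -- T maps the graph of A into the graph of A.closure
  have hmaps : Set.MapsTo T (A.graph : Set (H × H)) (A.closure.graph : Set (H × H)) := by
    rintro p hp
    rw [SetLike.mem_coe, A.mem_graph_iff] at hp
    obtain ⟨y, hy1, hy2⟩ := hp
    rw [SetLike.mem_coe, A.closure.mem_graph_iff]
    refine ⟨⟨a y, hmapD y y.2⟩, ?_, ?_⟩
    · simp [hTapp, hy1]
    · have := hδ y y.2
      rw [hTapp]
      simp only at this ⊢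
      rw [← hy1, ← hy2]
      have : A ⟨(y : H), y.2⟩ = A y := rfl
      rw [hδ y y.2, this]
      abel
  -- hence T maps the closure of the graph into itself
  have hclosed : IsClosed (A.closure.graph : Set (H × H)) := hclosable.closure_isClosed
  have hgraph : closure (A.graph : Set (H × H)) = (A.closure.graph : Set (H × H)) := by
    rw [← hclosable.graph_closure_eq_closure_graph]
    exact (A.graph.topologicalClosure_coe).symm ▸ rfl
  have hmaps2 : Set.MapsTo T (A.closure.graph : Set (H × H)) (A.closure.graph : Set (H × H)) := by
    intro p hp
    have hp' : p ∈ closure (A.graph : Set (H × H)) := by rw [hgraph]; exact hp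
    have := (hmaps.closure T.continuous) hp'
    rwa [hclosed.closure_eq] at this
  -- key membership fact
  have key : ∀ x (hx : x ∈ A.closure.domain),
      (a x, δ x + a (A.closure ⟨x, hx⟩)) ∈ A.closure.graph := by
    intro x hx
    have hmem : ((x : H), A.closure ⟨x, hx⟩) ∈ A.closure.graph := A.closure.mem_graph ⟨x, hx⟩
    have := hmaps2 hmem
    rwa [hTapp] at this
  have hinv : ∀ x ∈ A.closure.domain, a x ∈ A.closure.domain := by
    intro x hx
    obtain ⟨y, hy1, -⟩ := (A.closure.mem_graph_iff).mp (key x hx)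
    simp only at hy1
    exact hy1 ▸ y.2
  refine ⟨hinv, fun x hx => ?_⟩
  obtain ⟨y, hy1, hy2⟩ := (A.closure.mem_graph_iff).mp (key x hx)
  have : A.closure ⟨a x, hinv x hx⟩ = A.closure y := by
    congr 1
    exact Subtype.ext hy1.symm
  rw [this, hy2]
  simp only
  abel
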